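/- Let f : I → X and g : I → ℂ be bounded. If f belongs to Q_h-AAP(I:X) and g to Q-AAP(I:ℂ), then the pointwise product fg belongs to Q-AAP(I:X). -/

import Mathlib

open Set Filter MeasureTheory

def IsQAAP {X : Type*} [NormedAddCommGroup X] (I : Set ℝ) (f : ℝ → X) : Prop :=
  ContinuousOn f I ∧ (∃ C, ∀ t ∈ I, ‖f t‖ ≤ C) ∧
  ∀ ε > (0:ℝ), ∃ L > (0:ℝ), ∀ a : ℝ, Set.Icc a (a + L) ⊆ I →
    ∃ τ ∈ Set.Icc a (a + L), ∃ M > (0:ℝ),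
      ∀ t ∈ I, M ≤ |t| → ‖f (t + τ) - f t‖ ≤ ε

def IsAAP {X : Type*} [NormedAddCommGroup X] (I : Set ℝ) (f : ℝ → X) : Prop :=
  ContinuousOn f I ∧ (∃ C, ∀ t ∈ I, ‖f t‖ ≤ C) ∧
  ∀ ε > (0:ℝ), ∃ l > (0:ℝ), ∃ M > (0:ℝ), ∀ a : ℝ, Set.Icc a (a + l) ⊆ I →
    ∃ τ ∈ Set.Icc a (a + l),
      ∀ t ∈ I, M ≤ |t| → M ≤ |t + τ| → ‖f (t + τ) - f t‖ ≤ ε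
/-- Q_h-AAP: for each ε > 0 and *every* τ ∈ I there is M(ε,τ) > 0 such that
‖f(t+τ) − f t‖ ≤ ε whenever t ∈ I and |t| ≥ M(ε,τ). -/
def IsQhAAP {X : Type*} [NormedAddCommGroup X] (I : Set ℝ) (f : ℝ → X) : Prop :=
  ContinuousOn f I ∧ (∃ C, ∀ t ∈ I, ‖f t‖ ≤ C) ∧
  ∀ ε > (0:ℝ), ∀ τ ∈ I, ∃ M > (0:ℝ),
    ∀ t ∈ I, M ≤ |t| → ‖f (t + τ) - f t‖ ≤ ε

/-- If f ∈ Q_h-AAP(I:X) and g ∈ Q-AAP(I:ℂ) are bounded, then fg ∈ Q-AAP(I:X). -/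
theorem isQAAP_smul {X : Type*} [NormedAddCommGroup X] [NormedSpace ℂ X]
    (I : Set ℝ) (hI : I = Set.univ ∨ I = Set.Ici 0)
    (f : ℝ → X) (g : ℝ → ℂ)
    (hf : IsQhAAP I f) (hg : IsQAAP I g) :
    IsQAAP I (fun t => g t • f t) := by
  obtain ⟨hfc, ⟨Cf, hCf⟩, hfq⟩ := hf
  obtain ⟨hgc, ⟨Cg, hCg⟩, hgq⟩ := hg
  set Cf' : ℝ := max Cf 0 with hCf'
  set Cg' : ℝ := max Cg 0 with hCg'
  have hCf'0 : 0 ≤ Cf' := le_max_right _ _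
  have hCg'0 : 0 ≤ Cg' := le_max_right _ _
  have hCfb : ∀ t ∈ I, ‖f t‖ ≤ Cf' := fun t ht => (hCf t ht).trans (le_max_left _ _)
  have hCgb : ∀ t ∈ I, ‖g t‖ ≤ Cg' := fun t ht => (hCg t ht).trans (le_max_left _ _)
  have hmem : ∀ t ∈ I, ∀ τ ∈ I, t + τ ∈ I := by
    intro t ht τ hτ
    rcases hI with h | h
    · simp [h]
    · rw [h] at ht hτ ⊢
      exact Set.mem_Ici.mpr (add_nonneg (Set.mem_Ici.mp ht) (Set.mem_Ici.mp hτ))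
  refine ⟨hgc.smul hfc, ⟨Cg' * Cf', fun t ht => ?_⟩, ?_⟩
  · calc ‖g t • f t‖ = ‖g t‖ * ‖f t‖ := norm_smul _ _
      _ ≤ Cg' * Cf' := mul_le_mul (hCgb t ht) (hCfb t ht) (norm_nonneg _) hCg'0
  intro ε hε
  have hεf : (0:ℝ) < ε / (2 * (Cg' + 1)) := by positivity
  have hεg : (0:ℝ) < ε / (2 * (Cf' + 1)) := by positivity
  obtain ⟨l, hl, hgl⟩ := hgq _ hεg
  refine ⟨l, hl, fun a ha => ?_⟩
  obtain ⟨τ, hτ, Mg, hMg, hgτ⟩ := hgl a ha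
  have hτI : τ ∈ I := ha hτ
  obtain ⟨Mf, hMf, hfτ⟩ := hfq _ hεf τ hτI
  refine ⟨τ, hτ, max Mf (Mg + |τ|), lt_max_of_lt_left hMf, fun t ht hMt => ?_⟩
  have htMf : Mf ≤ |t| := le_trans (le_max_left _ _) hMt
  have htMg : Mg ≤ |t| := by
    have := le_trans (le_max_right _ _) hMt
    linarith [abs_nonneg τ]
  have htτI : t + τ ∈ I := hmem t ht τ hτI
  have key : (fun t => g t • f t) (t + τ) - (fun t => g t • f t) t
      = g (t + τ) • (f (t + τ) - f t) + (g (t + τ) - g t) • f t := by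
    simp only [smul_sub, sub_smul]
    abel
  rw [key]
  calc ‖g (t + τ) • (f (t + τ) - f t) + (g (t + τ) - g t) • f t‖
      ≤ ‖g (t + τ) • (f (t + τ) - f t)‖ + ‖(g (t + τ) - g t) • f t‖ := norm_add_le _ _
    _ = ‖g (t + τ)‖ * ‖f (t + τ) - f t‖ + ‖g (t + τ) - g t‖ * ‖f t‖ := by
        rw [norm_smul, norm_smul]
    _ ≤ Cg' * (ε / (2 * (Cg' + 1))) + (ε / (2 * (Cf' + 1))) * Cf' := by
        gcongr
        · exact hCgb _ htτI
        · exact hfτ t ht htMf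
        · exact hgτ t ht htMg
        · exact hCfb t ht
    _ ≤ ε / 2 + ε / 2 := by
        refine add_le_add ?_ ?_
        · rw [mul_div_assoc' , div_le_div_iff₀ (by positivity) (by norm_num)]
          nlinarith [hε.le, hCg'0]
        · rw [div_mul_eq_mul_div, div_le_div_iff₀ (by positivity) (by norm_num)]
          nlinarith [hε.le, hCf'0]
    _ = ε := by ring
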